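/- Let U ⊆ X be open convex and f : U → Y a differentiable mapping such that for every U-bounded set K ⊆ U, f'(K) is a uniformly p-convergent subset of L(X,Y). Then f is weakly p-sequentially continuous: f maps U-bounded weakly p-Cauchy sequences to norm convergent sequences. -/

import Mathlib

open Filter Topology Metric Bornology ENNReal

noncomputable section

universe u v w

variable {X : Type*} {Y : Type*} {Z : Type*}

section Defs
variable [NormedAddCommGroup X] [NormedSpace ℝ X]
variable [NormedAddCommGroup Y] [NormedSpace ℝ Y]

/-- A sequence is weakly `p`-summable if `(x*(xₙ))ₙ ∈ ℓ_p` for every functional `x*`;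
for `p = ∞` we use weakly null sequences. -/
def WeaklyPSummable (p : ℝ≥0∞) (x : ℕ → X) : Prop :=
  if p = ⊤ then ∀ f : X →L[ℝ] ℝ, Tendsto (fun n => f (x n)) atTop (𝓝 0)
  else ∀ f : X →L[ℝ] ℝ, Memℓp (fun n => f (x n)) p

/-- A set of operators is uniformly `p`-convergent if every weakly `p`-summable
sequence converges to `0` uniformly on the set. -/
def UnifPConvergent (p : ℝ≥0∞) (K : Set (X →L[ℝ] Y)) : Prop :=
  ∀ x : ℕ → X, WeaklyPSummable p x →
    ∀ ε > (0 : ℝ), ∃ N : ℕ, ∀ n ≥ N, ∀ T ∈ K, ‖T (x n)‖ < ε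

/-- A `p`-convergent operator maps weakly `p`-summable sequences to norm-null sequences. -/
def PConvergentOp (p : ℝ≥0∞) (T : X →L[ℝ] Y) : Prop :=
  ∀ x : ℕ → X, WeaklyPSummable p x → Tendsto (fun n => ‖T (x n)‖) atTop (𝓝 0)

/-- A sequence is weakly `p`-Cauchy if all differences along pairs of increasing
index sequences are weakly `p`-summable. -/
def WeaklyPCauchy (p : ℝ≥0∞) (x : ℕ → X) : Prop :=
  ∀ m k : ℕ → ℕ, StrictMono m → StrictMono k →
    WeaklyPSummable p (fun n => x (m n) - x (k n))

/-- A set is weakly `p`-precompact if every sequence in it has a weakly `p`-Cauchy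
subsequence. -/
def WeaklyPPrecompact (p : ℝ≥0∞) (A : Set X) : Prop :=
  ∀ x : ℕ → X, (∀ n, x n ∈ A) →
    ∃ s : ℕ → ℕ, StrictMono s ∧ WeaklyPCauchy p (fun n => x (s n))

/-- `B` is `U`-bounded: bounded and with positive distance to the boundary of `U`. -/
def UBounded (U B : Set X) : Prop :=
  IsBounded B ∧ B ⊆ U ∧ ∃ d > (0 : ℝ), ∀ x ∈ B, ball x d ⊆ U

/-- A set of operators is equicompact if every bounded sequence has a subsequence on
which the operators converge in norm, uniformly on the set. -/
def Equicompact (M : Set (X →L[ℝ] Y)) : Prop :=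
  ∀ x : ℕ → X, IsBounded (Set.range x) →
    ∃ s : ℕ → ℕ, StrictMono s ∧ ∃ g : (X →L[ℝ] Y) → Y,
      TendstoUniformlyOn (fun n T => T (x (s n))) g atTop M

/-- A set of operators is weakly equicompact if every bounded sequence has a
subsequence on which the operators converge weakly, uniformly on the set. -/
def WeaklyEquicompact (M : Set (X →L[ℝ] Y)) : Prop :=
  ∀ x : ℕ → X, IsBounded (Set.range x) →
    ∃ s : ℕ → ℕ, StrictMono s ∧ ∀ φ : Y →L[ℝ] ℝ, ∃ c : (X →L[ℝ] Y) → ℝ,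
      TendstoUniformlyOn (fun n T => φ (T (x (s n)))) c atTop M

/-- A weakly compact operator: the image of every bounded sequence has a weakly
convergent subsequence. -/
def WeaklyCompactOp (T : X →L[ℝ] Y) : Prop :=
  ∀ x : ℕ → X, IsBounded (Set.range x) →
    ∃ s : ℕ → ℕ, StrictMono s ∧ ∃ y : Y,
      ∀ φ : Y →L[ℝ] ℝ, Tendsto (fun n => φ (T (x (s n)))) atTop (𝓝 (φ y))

/-- A space has the `p`-Schur property if weakly `p`-summable sequences are norm null. -/
def PSchur (p : ℝ≥0∞) (W : Type*) [NormedAddCommGroup W] [NormedSpace ℝ W] : Prop :=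
  ∀ x : ℕ → W, WeaklyPSummable p x → Tendsto (fun n => ‖x n‖) atTop (𝓝 0)

/-- A set is relatively weakly `p`-compact if every sequence in it has a subsequence
weakly `p`-convergent to a point of the space. -/
def RelWeaklyPCompact (p : ℝ≥0∞) (A : Set X) : Prop :=
  ∀ x : ℕ → X, (∀ n, x n ∈ A) →
    ∃ s : ℕ → ℕ, StrictMono s ∧ ∃ a : X, WeaklyPSummable p (fun n => x (s n) - a)

/-- `f` is weakly `p`-sequentially continuous on `U` if it maps `U`-bounded weakly
`p`-Cauchy sequences to norm convergent sequences. -/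
def WeaklyPSeqContinuous (p : ℝ≥0∞) (U : Set X) (f : X → Y) : Prop :=
  ∀ x : ℕ → X, (∀ n, x n ∈ U) → UBounded U (Set.range x) → WeaklyPCauchy p x →
    ∃ y : Y, Tendsto (fun n => f (x n)) atTop (𝓝 y)

end Defs
/-- If `f : U → Y` is differentiable and `f'` maps `U`-bounded sets to
uniformly `p`-convergent subsets of `L(X,Y)`, then `f` is weakly `p`-sequentially
continuous. -/
theorem stmt17 [NormedAddCommGroup X] [NormedSpace ℝ X] [CompleteSpace X]
    [NormedAddCommGroup Y] [NormedSpace ℝ Y] [CompleteSpace Y]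
    (p : ℝ≥0∞) (hp : 1 ≤ p)
    (U : Set X) (hU : IsOpen U) (hUc : Convex ℝ U)
    (f : X → Y) (f' : X → X →L[ℝ] Y)
    (hd : ∀ x ∈ U, HasFDerivAt f (f' x) x)
    (hK : ∀ K : Set X, UBounded U K → UnifPConvergent p (f' '' K)) :
    WeaklyPSeqContinuous p U f := by

  intro x hxU hB hC
  -- It suffices to show the sequence (f (x n)) is Cauchy
  suffices h : CauchySeq (fun n => f (x n)) from cauchySeq_tendsto_of_complete h
  by_contra hnc
  -- extract ε and pairs at every stage
  rw [Metric.cauchySeq_iff] at hnc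
  push_neg at hnc
  obtain ⟨ε, hε, hbad⟩ := hnc
  -- The convex hull of the range is U-bounded
  set K : Set X := convexHull ℝ (Set.range x) with hKdef
  have hrange : Set.range x ⊆ K := subset_convexHull ℝ _
  obtain ⟨hBb, hBU, d, hd0, hdball⟩ := hB
  have hKU : K ⊆ U := convexHull_min hBU hUc
  have hKUb : UBounded U K := by
    refine ⟨isBounded_convexHull.2 hBb, hKU, d, hd0, ?_⟩
    have hVconv : Convex ℝ {y : X | ball y d ⊆ U} := by
      intro a ha b hb s t hs ht hst z hz
      have hw : ‖z - (s • a + t • b)‖ < d := by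
        simpa [dist_eq_norm] using hz
      have hz' : z = s • (a + (z - (s • a + t • b))) + t • (b + (z - (s • a + t • b))) := by
        rw [smul_add, smul_add]
        have : (s + t) • (z - (s • a + t • b)) = z - (s • a + t • b) := by
          rw [hst, one_smul]
        rw [show s • a + s • (z - (s • a + t • b)) + (t • b + t • (z - (s • a + t • b)))
            = s • a + t • b + (s + t) • (z - (s • a + t • b)) by
          rw [add_smul]; abel]
        rw [this]; abel
      rw [hz']
      refine hUc (ha ?_) (hb ?_) hs ht hst
      · simpa [mem_ball, dist_eq_norm] using hw
      · simpa [mem_ball, dist_eq_norm] using hw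
    exact fun y hy => convexHull_min (fun b hb => hdball b hb) hVconv hy
  -- build strictly increasing sequences of bad pairs
  have hbad' : ∀ N : ℕ, ∃ q : ℕ × ℕ, N ≤ q.1 ∧ N ≤ q.2 ∧
      ε ≤ dist (f (x q.1)) (f (x q.2)) := by
    intro N
    obtain ⟨a, ha, b, hb, hab⟩ := hbad N
    exact ⟨(a, b), ha, hb, hab⟩
  choose q hq1 hq2 hq3 using hbad'
  let seq : ℕ → ℕ × ℕ := fun n => Nat.rec (q 0) (fun _ pr => q (max pr.1 pr.2 + 1)) n
  have hseq : ∀ n, seq (n + 1) = q (max (seq n).1 (seq n).2 + 1) := fun n => rfl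
  set m : ℕ → ℕ := fun n => (seq n).1 with hm
  set k : ℕ → ℕ := fun n => (seq n).2 with hk
  have hmono : ∀ n, m n < m (n + 1) ∧ k n < k (n + 1) := by
    intro n
    constructor
    · calc m n ≤ max (seq n).1 (seq n).2 := le_max_left _ _
        _ < max (seq n).1 (seq n).2 + 1 := Nat.lt_succ_self _
        _ ≤ (q (max (seq n).1 (seq n).2 + 1)).1 := hq1 _
        _ = m (n + 1) := rfl
    · calc k n ≤ max (seq n).1 (seq n).2 := le_max_right _ _
        _ < max (seq n).1 (seq n).2 + 1 := Nat.lt_succ_self _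
        _ ≤ (q (max (seq n).1 (seq n).2 + 1)).2 := hq2 _
        _ = k (n + 1) := rfl
  have hmm : StrictMono m := strictMono_nat_of_lt_succ fun n => (hmono n).1
  have hkm : StrictMono k := strictMono_nat_of_lt_succ fun n => (hmono n).2
  have hfar : ∀ n, ε ≤ ‖f (x (m n)) - f (x (k n))‖ := by
    intro n
    cases n with
    | zero => rw [← dist_eq_norm]; exact hq3 0
    | succ n =>
        have := hq3 (max (seq n).1 (seq n).2 + 1)
        simpa [m, k, hseq, dist_eq_norm] using this
  -- the difference sequence is weakly p-summable
  have hws : WeaklyPSummable p (fun n => x (m n) - x (k n)) := hC m k hmm hkm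
  -- uniform p-convergence gives eventual smallness
  obtain ⟨N, hN⟩ := hK K hKUb _ hws (ε / 2) (by linarith)
  -- contradiction at index N via MVT on the segment
  have hKey : ‖f (x (m N)) - f (x (k N))‖ ≤ ε / 2 := by
    set a : X := x (k N)
    set b : X := x (m N)
    set v : X := b - a with hv
    set c : ℝ → X := fun t => a + t • v with hc
    have hcK : ∀ t ∈ Set.Icc (0 : ℝ) 1, c t ∈ K := by
      intro t ht
      have ha : a ∈ K := hrange ⟨k N, rfl⟩
      have hb : b ∈ K := hrange ⟨m N, rfl⟩
      have := (convex_convexHull ℝ (Set.range x)) ha hb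
        (by linarith [ht.2] : (0:ℝ) ≤ 1 - t) ht.1 (by ring)
      have heq : (1 - t) • a + t • b = c t := by
        simp only [hc, hv, smul_sub, sub_smul, one_smul]
        abel
      rwa [heq] at this
    have hder : ∀ t ∈ Set.Icc (0 : ℝ) 1,
        HasDerivWithinAt (fun t => f (c t)) ((f' (c t)) v) (Set.Icc (0 : ℝ) 1) t := by
      intro t ht
      have hfd : HasFDerivAt f (f' (c t)) (c t) := hd _ (hKU (hcK t ht))
      have hline : HasDerivAt c v t := by
        simpa [hc] using ((hasDerivAt_id t).smul_const v).const_add a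
      exact (hfd.comp_hasDerivAt t hline).hasDerivWithinAt
    have hbound : ∀ t ∈ Set.Ico (0 : ℝ) 1, ‖(f' (c t)) v‖ ≤ ε / 2 := by
      intro t ht
      have hTmem : f' (c t) ∈ f' '' K := ⟨c t, hcK t ⟨ht.1, le_of_lt ht.2⟩, rfl⟩
      exact le_of_lt (hN N le_rfl _ hTmem)
    have := norm_image_sub_le_of_norm_deriv_le_segment_01' hder hbound
    have h1 : c 1 = b := by simp [hc, hv]
    have h0 : c 0 = a := by simp [hc]
    rwa [h1, h0] at this
  have := hfar N
  linarith
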